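/- Let p be prime and L = X^{p^{n'}} - (a_ℓ X^{p^ℓ} + ... + a_0 X) a linearized polynomial over F_{p^n} with 1 ≤ ℓ and a_ℓ ≠ 0. If L splits completely over F_{p^n}, then ℓ·n/n'^2 ≥ 3/4. -/

import Mathlib

open Polynomial

noncomputable def auxF (p n' ℓ : ℕ) {R : Type*} [CommSemiring R] (a : ℕ → R) : ℕ → Polynomial R
  | 0 => X
  | k + 1 => ∑ i ∈ Finset.range (ℓ + 1),
      C ((a i) ^ p ^ (k * n')) * (auxF p n' ℓ a k) ^ p ^ i

lemma auxF_succ (p n' ℓ : ℕ) {R : Type*} [CommSemiring R] (a : ℕ → R) (k : ℕ) :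
    auxF p n' ℓ a (k + 1) = ∑ i ∈ Finset.range (ℓ + 1),
      C ((a i) ^ p ^ (k * n')) * (auxF p n' ℓ a k) ^ p ^ i := rfl

lemma auxF_spec (p n' ℓ : ℕ) {R : Type*} [Field R] (hp : 1 < p) (hℓ : 1 ≤ ℓ) (a : ℕ → R)
    (ha : a ℓ ≠ 0) :
    ∀ k, (auxF p n' ℓ a k) ≠ 0 ∧ (auxF p n' ℓ a k).natDegree = p ^ (k * ℓ)
  | 0 => by simp [auxF]
  | k + 1 => by
    obtain ⟨h0, hdeg⟩ := auxF_spec p n' ℓ hp hℓ a ha k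
    have hp0 : 0 < p := by omega
    set F := auxF p n' ℓ a k with hF
    set D := p ^ ((k + 1) * ℓ) with hD
    have hc : (a ℓ ^ p ^ (k * n')) ≠ 0 := pow_ne_zero _ ha
    set B := C (a ℓ ^ p ^ (k * n')) * F ^ p ^ ℓ with hB
    set A := ∑ i ∈ Finset.range ℓ, C ((a i) ^ p ^ (k * n')) * F ^ p ^ i with hA
    have hsplit : auxF p n' ℓ a (k + 1) = A + B := by
      rw [auxF_succ, Finset.sum_range_succ]
    have hFpow : (F ^ p ^ ℓ).natDegree = D := by
      rw [natDegree_pow, hdeg, ← pow_add, hD]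
      congr 1
      ring
    have hBdeg : B.natDegree = D := by rw [hB, natDegree_C_mul hc, hFpow]
    have hAdeg : A.natDegree ≤ p ^ (k * ℓ + (ℓ - 1)) := by
      apply Polynomial.natDegree_sum_le_of_forall_le
      intro i hi
      have hi' : i < ℓ := Finset.mem_range.mp hi
      calc (C ((a i) ^ p ^ (k * n')) * F ^ p ^ i).natDegree
          ≤ (F ^ p ^ i).natDegree := natDegree_C_mul_le _ _
        _ = p ^ i * p ^ (k * ℓ) := by rw [natDegree_pow, hdeg]
        _ = p ^ (k * ℓ + i) := by rw [← pow_add]; ring_nf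
        _ ≤ p ^ (k * ℓ + (ℓ - 1)) := Nat.pow_le_pow_right hp0 (by omega)
    have hAD : A.natDegree < D := by
      refine lt_of_le_of_lt hAdeg ?_
      apply Nat.pow_lt_pow_right hp
      have : (k + 1) * ℓ = k * ℓ + ℓ := by ring
      omega
    have hcoeff : (auxF p n' ℓ a (k + 1)).coeff D ≠ 0 := by
      rw [hsplit, coeff_add, coeff_eq_zero_of_natDegree_lt hAD, zero_add, hB, coeff_C_mul]
      rw [← hFpow, coeff_natDegree]
      exact mul_ne_zero hc (leadingCoeff_ne_zero.mpr (pow_ne_zero _ h0))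
    have hne : auxF p n' ℓ a (k + 1) ≠ 0 := fun h => hcoeff (by simp [h])
    refine ⟨hne, le_antisymm ?_ (le_natDegree_of_ne_zero hcoeff)⟩
    rw [hsplit]
    exact le_trans (natDegree_add_le _ _) (by rw [hBdeg]; exact max_le (le_of_lt hAD) le_rfl)

lemma auxF_eval (p n' ℓ : ℕ) {R : Type*} [CommRing R] (hp : p.Prime) [CharP R p]
    (a : ℕ → R) (x : R)
    (hx : x ^ p ^ n' = ∑ i ∈ Finset.range (ℓ + 1), a i * x ^ p ^ i) (k : ℕ) :
    (auxF p n' ℓ a k).eval x = x ^ p ^ (k * n') := by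
  haveI : Fact p.Prime := ⟨hp⟩
  induction k with
  | zero => simp [auxF]
  | succ k ih =>
    have hfrob : ∀ s : Finset ℕ, ∀ f : ℕ → R,
        (∑ i ∈ s, f i) ^ p ^ (k * n') = ∑ i ∈ s, (f i) ^ p ^ (k * n') := by
      intro s f
      simpa only [iterateFrobenius_def] using map_sum (iterateFrobenius R p (k * n')) f s
    rw [auxF_succ, eval_finset_sum]
    have : ∀ i ∈ Finset.range (ℓ + 1),
        eval x (C ((a i) ^ p ^ (k * n')) * (auxF p n' ℓ a k) ^ p ^ i)
          = (a i * x ^ p ^ i) ^ p ^ (k * n') := by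
      intro i _
      rw [eval_mul, eval_C, eval_pow, ih, mul_pow]
      congr 1
      rw [← pow_mul, ← pow_mul, mul_comm (p ^ (k * n'))]
    rw [Finset.sum_congr rfl this, ← hfrob, ← hx, ← pow_mul, ← pow_add]
    congr 1
    ring

lemma ncard_roots_le {K : Type*} [Field K] (H : Polynomial K) (hH : H ≠ 0)
    (S : Set K) (hS : ∀ x ∈ S, H.eval x = 0) : S.ncard ≤ H.natDegree := by
  classical
  have h1 : S ⊆ (H.roots.toFinset : Set K) := by
    intro x hx
    simp only [Finset.coe_sort_coe, Multiset.mem_toFinset, Finset.mem_coe]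
    exact (mem_roots hH).mpr (hS x hx)
  calc S.ncard ≤ ((H.roots.toFinset : Set K)).ncard := Set.ncard_le_ncard h1 (Set.toFinite _)
    _ = H.roots.toFinset.card := Set.ncard_coe_finset _
    _ ≤ Multiset.card H.roots := Multiset.toFinset_card_le _
    _ ≤ H.natDegree := Polynomial.card_roots' H

theorem stmt_5 (p n n' ℓ : ℕ) [Fact p.Prime] (hn : 0 < n) (hℓ : 1 ≤ ℓ) (hn' : ℓ < n')
    (a : ℕ → GaloisField p n) (ha : a ℓ ≠ 0)
    (L : Polynomial (GaloisField p n))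
    (hL : L = Polynomial.X ^ (p ^ n') -
      ∑ i ∈ Finset.range (ℓ + 1), Polynomial.C (a i) * Polynomial.X ^ (p ^ i))
    (hroots : {x : GaloisField p n | Polynomial.eval x L = 0}.ncard = p ^ n') :
    (ℓ : ℚ) * (n : ℚ) / (n' : ℚ) ^ 2 ≥ 3 / 4 := by
  have hp : p.Prime := Fact.out
  have hp1 : 1 < p := hp.one_lt
  have hp0 : 0 < p := hp.pos
  haveI : Fintype (GaloisField p n) := Fintype.ofFinite _
  set V : Set (GaloisField p n) := {x | Polynomial.eval x L = 0} with hVdef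
  have hmem : ∀ x ∈ V, x ^ p ^ n' = ∑ i ∈ Finset.range (ℓ + 1), a i * x ^ p ^ i := by
    intro x hx
    have hx0 : Polynomial.eval x L = 0 := hx
    rw [hL, eval_sub, eval_pow, eval_X, eval_finset_sum] at hx0
    simp only [eval_mul, eval_C, eval_pow, eval_X] at hx0
    exact sub_eq_zero.mp hx0
  have hxq : ∀ x : GaloisField p n, x ^ p ^ n = x := by
    intro x
    have h := GaloisField.card p n hn.ne'
    rw [Nat.card_eq_fintype_card] at h
    rw [← h]
    exact FiniteField.pow_card x
  have spec := auxF_spec p n' ℓ hp1 hℓ a ha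
  have heval : ∀ x ∈ V, ∀ k, (auxF p n' ℓ a k).eval x = x ^ p ^ (k * n') :=
    fun x hx k => auxF_eval p n' ℓ hp a x (hmem x hx) k
  have count : ∀ H : Polynomial (GaloisField p n), H ≠ 0 → (∀ x ∈ V, H.eval x = 0) →
      p ^ n' ≤ H.natDegree := by
    intro H h0 hv
    rw [← hroots]
    exact ncard_roots_le H h0 V hv
  -- Step 1: if k*n' ≤ n then (k+1)*n' ≤ n + k*ℓ
  have step1 : ∀ k, 1 ≤ k → k * n' ≤ n → (k + 1) * n' ≤ n + k * ℓ := by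
    intro k hk1 hkn
    obtain ⟨h0, hdeg⟩ := spec k
    set s := n - k * n' with hs
    set G : Polynomial (GaloisField p n) := X - (auxF p n' ℓ a k) ^ p ^ s with hG
    have hkl1 : 1 ≤ k * ℓ := Nat.mul_le_mul hk1 hℓ
    have hdegpow : ((auxF p n' ℓ a k) ^ p ^ s).natDegree = p ^ (s + k * ℓ) := by
      rw [natDegree_pow, hdeg, ← pow_add]
    have hp2 : 2 ≤ p ^ (s + k * ℓ) := by
      calc 2 ≤ p := hp1
        _ = p ^ 1 := (pow_one p).symm
        _ ≤ p ^ (s + k * ℓ) := Nat.pow_le_pow_right hp0 (by omega)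
    have hG0 : G ≠ 0 := by
      intro h
      have hXe : (X : Polynomial (GaloisField p n)) = (auxF p n' ℓ a k) ^ p ^ s :=
        sub_eq_zero.mp h
      have : (1 : ℕ) = p ^ (s + k * ℓ) := by
        rw [← natDegree_X (R := GaloisField p n), hXe, hdegpow]
      omega
    have hGv : ∀ x ∈ V, G.eval x = 0 := by
      intro x hx
      rw [hG, eval_sub, eval_X, eval_pow, heval x hx k, ← pow_mul, ← pow_add]
      have hsum : k * n' + s = n := by omega
      rw [hsum, hxq x, sub_self]
    have hGdeg : G.natDegree ≤ p ^ (s + k * ℓ) := by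
      refine le_trans (natDegree_sub_le _ _) ?_
      rw [natDegree_X, hdegpow]
      exact max_le (by omega) le_rfl
    have hfin : p ^ n' ≤ p ^ (s + k * ℓ) := le_trans (count G hG0 hGv) hGdeg
    have hexp : n' ≤ s + k * ℓ := (Nat.pow_le_pow_iff_right hp1).mp hfin
    have hmul : (k + 1) * n' = k * n' + n' := by ring
    omega
  -- Step 2
  have step2 : ∀ k, k * n' ≤ n → (k + 1) * n' ≤ n + k * ℓ → (k + 1) * ℓ < n' →
      (k + 1) * n' ≤ n := by
    intro k hkn hii hkl
    by_contra hcon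
    push_neg at hcon
    set r := (k + 1) * n' - n with hr
    have hmuln : (k + 1) * n' = k * n' + n' := by ring
    have hmull : (k + 1) * ℓ = k * ℓ + ℓ := by ring
    have hr1 : 1 ≤ r := by omega
    have hrkl : r ≤ k * ℓ := by omega
    have hrlt : r < (k + 1) * ℓ := by omega
    obtain ⟨h0, hdeg⟩ := spec (k + 1)
    set H : Polynomial (GaloisField p n) := X ^ p ^ r - auxF p n' ℓ a (k + 1) with hH
    have hprlt : p ^ r < p ^ ((k + 1) * ℓ) := Nat.pow_lt_pow_right hp1 hrlt
    have hH0 : H ≠ 0 := by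
      intro h
      have hco : H.coeff (p ^ ((k + 1) * ℓ)) ≠ 0 := by
        rw [hH, coeff_sub, coeff_X_pow, if_neg (by omega), ← hdeg, coeff_natDegree, zero_sub]
        exact neg_ne_zero.mpr (leadingCoeff_ne_zero.mpr h0)
      exact hco (by simp [h])
    have hHv : ∀ x ∈ V, H.eval x = 0 := by
      intro x hx
      rw [hH, eval_sub, eval_pow, eval_X, heval x hx (k + 1)]
      have hsum : (k + 1) * n' = n + r := by omega
      rw [hsum, pow_add, pow_mul, hxq x, sub_self]
    have hHdeg : H.natDegree ≤ p ^ ((k + 1) * ℓ) := by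
      refine le_trans (natDegree_sub_le _ _) ?_
      rw [natDegree_X_pow, hdeg]
      exact max_le (by omega) le_rfl
    have hfin : p ^ n' ≤ p ^ ((k + 1) * ℓ) := le_trans (count H hH0 hHv) hHdeg
    have := (Nat.pow_le_pow_iff_right hp1).mp hfin
    omega
  -- main induction
  have claim : ∀ k, 1 ≤ k → k * ℓ < n' → k * n' ≤ n := by
    intro k
    induction k with
    | zero => omega
    | succ k ih =>
      intro _ hkl
      rcases Nat.eq_zero_or_pos k with rfl | hk
      · have hle : p ^ n' ≤ p ^ n := by
          rw [← hroots]
          have h1 : V.ncard ≤ (Set.univ : Set (GaloisField p n)).ncard :=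
            Set.ncard_le_ncard (Set.subset_univ V) Set.finite_univ
          rwa [Set.ncard_univ, GaloisField.card p n hn.ne'] at h1
        have := (Nat.pow_le_pow_iff_right hp1).mp hle
        omega
      · have hmull : (k + 1) * ℓ = k * ℓ + ℓ := by ring
        have hkl' : k * ℓ < n' := by omega
        have h1 := ih hk hkl'
        exact step2 k h1 (step1 k hk h1) hkl
  -- conclude
  set K : ℕ := (n' - 1) / ℓ with hK
  have hl0 : 0 < ℓ := hℓ
  have hK1 : 1 ≤ K := by
    rw [hK]
    exact Nat.one_le_div_iff hl0 |>.mpr (by omega)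
  have hKl : K * ℓ < n' := by
    have h1 := Nat.div_mul_le_self (n' - 1) ℓ
    rw [← hK] at h1
    omega
  have hKu : n' ≤ (K + 1) * ℓ := by
    have h2 := Nat.div_add_mod (n' - 1) ℓ
    have h3 := Nat.mod_lt (n' - 1) hl0
    rw [← hK] at h2
    have hm : (K + 1) * ℓ = ℓ * K + ℓ := by ring
    omega
  have hKn : K * n' ≤ n := claim K hK1 hKl
  have hfinal : (K + 1) * n' ≤ n + K * ℓ := step1 K hK1 hKn
  -- numeric conclusion : 3 * n'^2 ≤ 4 * ℓ * n over ℚ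
  have hn'0 : (0:ℚ) < (n' : ℚ) := by exact_mod_cast (show 0 < n' by omega)
  rw [ge_iff_le, div_le_div_iff₀ (by norm_num) (pow_pos hn'0 2)]
  -- goal : 3 * (n'^2) ≤ (ℓ * n) * 4  (shape may differ)
  have hQ : 3 * ((n' : ℚ))^2 ≤ 4 * ((ℓ : ℚ) * n) := by
    have c1 : ((K : ℚ) + 1) * n' ≤ (n : ℚ) + K * ℓ := by exact_mod_cast hfinal
    have c2 : (K : ℚ) * ℓ + 1 ≤ (n' : ℚ) := by exact_mod_cast hKl
    have c3 : (n' : ℚ) ≤ ((K : ℚ) + 1) * ℓ := by exact_mod_cast hKu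
    have c4 : (1 : ℚ) ≤ (ℓ : ℚ) := by exact_mod_cast hℓ
    have c5 : (ℓ : ℚ) + 1 ≤ (n' : ℚ) := by exact_mod_cast hn'
    have c6 : (1 : ℚ) ≤ (K : ℚ) := by exact_mod_cast hK1
    set v : ℚ := (n' : ℚ) - K * ℓ with hv
    set b : ℚ := (n' : ℚ) - ℓ with hb
    have hv1 : 1 ≤ v := by rw [hv]; linarith
    have hb0 : 0 ≤ b := by rw [hb]; linarith
    have hvb : v + b ≤ (n' : ℚ) := by rw [hv, hb]; linarith
    have hab : 4 * v * b ≤ (v + b)^2 := by nlinarith [sq_nonneg (v - b)]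
    have hsq : (v + b)^2 ≤ ((n' : ℚ))^2 := by nlinarith [hv1, hb0, hvb]
    nlinarith [c1, c2, c3, c4, c5, c6, hab, hsq, mul_pos (lt_of_lt_of_le zero_lt_one c4) hn'0]
  linarith
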